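/- For every J ∈ ℝ³, the Bowen–York angular-momentum field S^J(x)_{ab} = (3/‖x‖⁵)·(xₐ(J×x)_b + x_b(J×x)ₐ) on ℝ³∖{0} is a smooth solution of the Euclidean momentum constraint: for every x ≠ 0 the matrix S^J(x) is symmetric, has vanishing trace Σₐ S^J(x)_{aa} = 0, and is divergence-free, i.e. Σₐ ∂ₐ S^J(x)_{ab} = 0 for each b ∈ {1,2,3}. -/

import Mathlib

/-- The cross product `J × x` of two vectors of `ℝ³`, componentwise. -/
def crossVec (J x : EuclideanSpace ℝ (Fin 3)) : Fin 3 → ℝ :=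
  ![J 1 * x 2 - J 2 * x 1, J 2 * x 0 - J 0 * x 2, J 0 * x 1 - J 1 * x 0]

/-- The Bowen–York angular-momentum tensor
`S^J(x)_{ab} = (3/‖x‖⁵)(xₐ (J×x)_b + x_b (J×x)ₐ)`. -/
noncomputable def bowenYorkJ (J x : EuclideanSpace ℝ (Fin 3)) (a b : Fin 3) : ℝ :=
  (3 / ‖x‖ ^ 5) * (x a * crossVec J x b + x b * crossVec J x a)

abbrev E3 := EuclideanSpace ℝ (Fin 3)
noncomputable def pr (i : Fin 3) : E3 →L[ℝ] ℝ := EuclideanSpace.proj i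

noncomputable def crossL (J : E3) : Fin 3 → (E3 →L[ℝ] ℝ) :=
  ![J 1 • pr 2 - J 2 • pr 1, J 2 • pr 0 - J 0 • pr 2, J 0 • pr 1 - J 1 • pr 0]

lemma crossL_apply (J v : E3) (b : Fin 3) : crossL J b v = crossVec J v b := by
  fin_cases b <;> simp [crossL, crossVec, pr]

lemma hasFDerivAt_coord (x : E3) (i : Fin 3) :
    HasFDerivAt (fun y : E3 => y i) (pr i) x := (pr i).hasFDerivAt

lemma hasFDerivAt_cross (J x : E3) (b : Fin 3) :
    HasFDerivAt (fun y : E3 => crossVec J y b) (crossL J b) x := by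
  fin_cases b <;> simp only [crossVec, crossL, Matrix.cons_val_zero, Matrix.cons_val_one,
    Matrix.head_cons, Matrix.cons_val_two, Matrix.tail_cons, Fin.isValue] <;>
  exact ((hasFDerivAt_coord x _).const_mul _).sub ((hasFDerivAt_coord x _).const_mul _)

lemma hasFDerivAt_sq_coord (x : E3) (i : Fin 3) :
    HasFDerivAt (fun y : E3 => (y i)^2) ((2 * x i) • pr i) x := by
  have h2 : ((2 * x i) • pr i : E3 →L[ℝ] ℝ) = (pr i) x • pr i + (pr i) x • pr i := by
    ext v; simp [pr]; ring
  have := ((pr i).hasFDerivAt (x := x)).fun_mul ((pr i).hasFDerivAt (x := x))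
  rw [h2]; simpa [pow_two, pr] using this

noncomputable def Nx (x : E3) : E3 →L[ℝ] ℝ :=
  (2 * x 0) • pr 0 + (2 * x 1) • pr 1 + (2 * x 2) • pr 2

lemma norm_eq_sqrt (y : E3) : ‖y‖ = Real.sqrt ((y 0)^2 + (y 1)^2 + (y 2)^2) := by
  rw [EuclideanSpace.norm_eq]
  simp [Fin.sum_univ_three, Real.norm_eq_abs, sq_abs]

lemma normsq_eq (y : E3) : ‖y‖^2 = (y 0)^2 + (y 1)^2 + (y 2)^2 := by
  rw [norm_eq_sqrt, Real.sq_sqrt] <;> positivity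

lemma hasFDerivAt_norm' (x : E3) (hx : x ≠ 0) :
    HasFDerivAt (fun y : E3 => ‖y‖) ((1 / (2 * ‖x‖)) • Nx x) x := by
  have hr : ‖x‖ ≠ 0 := norm_ne_zero_iff.mpr hx
  have hQ : HasFDerivAt (fun y : E3 => (y 0)^2 + (y 1)^2 + (y 2)^2) (Nx x) x :=
    ((hasFDerivAt_sq_coord x 0).add (hasFDerivAt_sq_coord x 1)).add (hasFDerivAt_sq_coord x 2)
  have hQx : (x 0)^2 + (x 1)^2 + (x 2)^2 ≠ 0 := by
    rw [← normsq_eq]; positivity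
  have := hQ.sqrt hQx
  have hfun : (fun y : E3 => Real.sqrt ((y 0)^2 + (y 1)^2 + (y 2)^2)) = fun y : E3 => ‖y‖ := by
    funext y; rw [norm_eq_sqrt]
  rw [hfun] at this
  rwa [← norm_eq_sqrt] at this

lemma hasFDerivAt_BYJ (J x : E3) (hx : x ≠ 0) (a b : Fin 3) :
    HasFDerivAt (fun y : E3 => bowenYorkJ J y a b)
      ((3 * (‖x‖^5)⁻¹) • (x a • crossL J b + crossVec J x b • pr a
          + (x b • crossL J a + crossVec J x a • pr b))
        + (x a * crossVec J x b + x b * crossVec J x a) •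
          ((3 : ℝ) • ((-((‖x‖^5)^2)⁻¹) • (((5:ℕ) * ‖x‖^4) • ((1 / (2 * ‖x‖)) • Nx x))))) x := by
  have hr : ‖x‖ ≠ 0 := norm_ne_zero_iff.mpr hx
  have hnorm := hasFDerivAt_norm' x hx
  have hpow : HasFDerivAt (fun y : E3 => ‖y‖^5)
      (((5:ℕ) * ‖x‖^4) • ((1 / (2 * ‖x‖)) • Nx x)) x := by
    have h := (hasDerivAt_pow 5 ‖x‖).comp_hasFDerivAt x hnorm
    simp at h ⊢
    exact h
  have hinv : HasFDerivAt (fun y : E3 => (‖y‖^5)⁻¹)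
      ((-((‖x‖^5)^2)⁻¹) • (((5:ℕ) * ‖x‖^4) • ((1 / (2 * ‖x‖)) • Nx x))) x :=
    (hasDerivAt_inv (pow_ne_zero 5 hr)).comp_hasFDerivAt x hpow
  have hG := hinv.const_mul (3:ℝ)
  have hP : HasFDerivAt (fun y : E3 => y a * crossVec J y b + y b * crossVec J y a)
      (x a • crossL J b + crossVec J x b • pr a
        + (x b • crossL J a + crossVec J x a • pr b)) x :=
    ((hasFDerivAt_coord x a).mul (hasFDerivAt_cross J x b)).add
      ((hasFDerivAt_coord x b).mul (hasFDerivAt_cross J x a))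
  have := hG.fun_mul hP
  have hfun : (fun y : E3 => 3 * (‖y‖^5)⁻¹ * (y a * crossVec J y b + y b * crossVec J y a))
      = fun y : E3 => bowenYorkJ J y a b := by
    funext y; rw [bowenYorkJ, div_eq_mul_inv]
  rw [hfun] at this
  exact this


/-- For every `J ∈ ℝ³`, the Bowen–York angular-momentum field `S^J` on `ℝ³∖{0}` is a solution
of the Euclidean momentum constraint: for every `x ≠ 0` the matrix `S^J(x)` is symmetric,
trace-free and divergence-free. -/
theorem stmt_12 (J : EuclideanSpace ℝ (Fin 3)) :
    ∀ x : EuclideanSpace ℝ (Fin 3), x ≠ 0 →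
      (∀ a b : Fin 3, bowenYorkJ J x a b = bowenYorkJ J x b a) ∧
      (∑ a : Fin 3, bowenYorkJ J x a a) = 0 ∧
      (∀ b : Fin 3,
        ∑ a : Fin 3,
          fderiv ℝ (fun y : EuclideanSpace ℝ (Fin 3) => bowenYorkJ J y a b) x
            (EuclideanSpace.single a 1) = 0) := by
  intro x hx
  refine ⟨fun a b => by rw [bowenYorkJ, bowenYorkJ]; ring, ?_, ?_⟩
  · simp only [bowenYorkJ, Fin.sum_univ_three, crossVec, Matrix.cons_val_zero,
      Matrix.cons_val_one, Matrix.head_cons, Matrix.cons_val_two, Matrix.tail_cons]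
    ring
  · intro b
    have hr : ‖x‖ ≠ 0 := norm_ne_zero_iff.mpr hx
    rw [Fin.sum_univ_three,
    (hasFDerivAt_BYJ J x hx 0 b).fderiv, (hasFDerivAt_BYJ J x hx 1 b).fderiv,
    (hasFDerivAt_BYJ J x hx 2 b).fderiv]
    simp only [ContinuousLinearMap.add_apply, ContinuousLinearMap.smul_apply, smul_eq_mul,
      crossL_apply, Nx, pr, PiLp.proj_apply, EuclideanSpace.single_apply]
    have h2 := normsq_eq x
    fin_cases b
    · simp [crossVec, EuclideanSpace.single_apply]
      field_simp
      linear_combination (15 * (J 1 * x 2 - J 2 * x 1)) * h2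
    · simp [crossVec, EuclideanSpace.single_apply]
      field_simp
      linear_combination (15 * (J 2 * x 0 - J 0 * x 2)) * h2
    · simp [crossVec, EuclideanSpace.single_apply]
      field_simp
      linear_combination (15 * (J 0 * x 1 - J 1 * x 0)) * h2
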